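/- arXiv:2104.08567 — 2 statements merged into one kernel-verified Lean document; each statement's English description precedes it below -/
import Mathlib

section
/- Let f, g ∈ ℂ[[x,y]] and suppose f = A·x^{a₁}y^{a₂}, g = B·x^{b₁}y^{b₂} and g − f = C·x^{c₁}y^{c₂}, where A, B, C are units of ℂ[[x,y]]. Consider on ℤ_{≥0}² the componentwise partial order (p₁,p₂) ≤ (q₁,q₂) iff p₁ ≤ q₁ and p₂ ≤ q₂. Then the set of the three pairs {(a₁,a₂), (b₁,b₂), (c₁,c₂)} is totally ordered, and moreover two of these pairs are equal and are less than or equal to the third one. -/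
noncomputable section

/-- The ring `ℂ[[x,y]]` of formal power series in two variables. -/
abbrev R2 : Type := MvPowerSeries (Fin 2) ℂ

/-- The variable `x`. -/
def Xv : R2 := MvPowerSeries.X 0
/-- The variable `y`. -/
def Yv : R2 := MvPowerSeries.X 1

namespace Stmt6Aux

open MvPowerSeries

def e (p : ℕ × ℕ) : Fin 2 →₀ ℕ := Finsupp.single 0 p.1 + Finsupp.single 1 p.2

lemma e_le_e {p q : ℕ × ℕ} : e p ≤ e q ↔ p ≤ q := by
  constructor
  · intro h
    have h0 := h 0
    have h1 := h 1
    simp [e, Finsupp.single_apply] at h0 h1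
    exact ⟨h0, h1⟩
  · intro h i
    fin_cases i <;> simp [e, Finsupp.single_apply] <;> [exact h.1; exact h.2]

lemma key (U : R2) (p : ℕ × ℕ) :
    U * Xv ^ p.1 * Yv ^ p.2 = U * MvPowerSeries.monomial (e p) 1 := by
  rw [Xv, Yv, X_pow_eq, X_pow_eq, mul_assoc, monomial_mul_monomial, one_mul, e]

lemma coeff_self (U : R2) (p : ℕ × ℕ) :
    MvPowerSeries.coeff (e p) (U * Xv ^ p.1 * Yv ^ p.2) = constantCoeff U := by
  rw [key, coeff_mul_monomial, if_pos le_rfl]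
  simp

lemma coeff_zero (U : R2) {p q : ℕ × ℕ} (h : ¬ q ≤ p) :
    MvPowerSeries.coeff (e p) (U * Xv ^ q.1 * Yv ^ q.2) = 0 := by
  rw [key, coeff_mul_monomial, if_neg]
  exact fun hle => h (e_le_e.mp hle)

end Stmt6Aux

open Stmt6Aux MvPowerSeries in
theorem stmt_6 (f g A B C : R2) (hA : IsUnit A) (hB : IsUnit B) (hC : IsUnit C)
    (a b c : ℕ × ℕ)
    (hf : f = A * Xv ^ a.1 * Yv ^ a.2)
    (hg : g = B * Xv ^ b.1 * Yv ^ b.2)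
    (hgf : g - f = C * Xv ^ c.1 * Yv ^ c.2) :
    ((a ≤ b ∨ b ≤ a) ∧ (a ≤ c ∨ c ≤ a) ∧ (b ≤ c ∨ c ≤ b)) ∧
    ((a = b ∧ a ≤ c) ∨ (a = c ∧ a ≤ b) ∨ (b = c ∧ b ≤ a)) := by
  have hA0 : constantCoeff A ≠ 0 := (hA.map (constantCoeff)).ne_zero
  have hB0 : constantCoeff B ≠ 0 := (hB.map (constantCoeff)).ne_zero
  have hC0 : constantCoeff C ≠ 0 := (hC.map (constantCoeff)).ne_zero
  -- three comparability facts
  have fact1 : b ≤ a ∨ c ≤ a := by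
    by_contra h
    push_neg at h
    have := congrArg (MvPowerSeries.coeff (e a)) hgf
    rw [map_sub, hf, hg, coeff_self, coeff_zero B h.1, coeff_zero C h.2] at this
    simp only [zero_sub, neg_eq_zero] at this
    exact hA0 this
  have fact2 : a ≤ b ∨ c ≤ b := by
    by_contra h
    push_neg at h
    have := congrArg (MvPowerSeries.coeff (e b)) hgf
    rw [map_sub, hf, hg, coeff_self, coeff_zero A h.1, coeff_zero C h.2, sub_zero] at this
    exact hB0 this
  have fact3 : a ≤ c ∨ b ≤ c := by
    by_contra h
    push_neg at h
    have := congrArg (MvPowerSeries.coeff (e c)) hgf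
    rw [map_sub, hf, hg, coeff_self, coeff_zero A h.1, coeff_zero B h.2, sub_zero] at this
    exact hC0 this.symm
  -- case analysis
  have main : (a = b ∧ a ≤ c) ∨ (a = c ∧ a ≤ b) ∨ (b = c ∧ b ≤ a) := by
    rcases fact1 with h1 | h1 <;> rcases fact2 with h2 | h2 <;> rcases fact3 with h3 | h3
    · exact Or.inl ⟨le_antisymm h2 h1, h3⟩
    · exact Or.inl ⟨le_antisymm h2 h1, h2.trans h3⟩
    · exact Or.inl ⟨le_antisymm (h3.trans h2) h1, h3⟩
    · exact Or.inr (Or.inr ⟨le_antisymm h3 h2, h1⟩)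
    · exact Or.inr (Or.inl ⟨le_antisymm h3 h1, h2⟩)
    · exact Or.inr (Or.inl ⟨le_antisymm (h2.trans h3) h1, h2⟩)
    · exact Or.inr (Or.inl ⟨le_antisymm h3 h1, h3.trans h2⟩)
    · exact Or.inr (Or.inr ⟨le_antisymm h3 h2, h3.trans h1⟩)
  refine ⟨?_, main⟩
  rcases main with ⟨h, h'⟩ | ⟨h, h'⟩ | ⟨h, h'⟩
  · exact ⟨Or.inl h.le, Or.inl h', Or.inl (h ▸ h')⟩
  · exact ⟨Or.inl h', Or.inl h.le, Or.inr (h ▸ h')⟩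
  · exact ⟨Or.inr h', Or.inr (h ▸ h'), Or.inl h.le⟩
end
end

section
/- Let U be an open neighborhood of 0 in ℂ², let f, g, u : U → ℂ be analytic with u(0) = 1, and set F = f/g and F̃ = u·F on the set where g does not vanish. Then for every t₀ ∈ ℂ: t₀ is an asymptotic critical value of F at the origin if and only if t₀ is an asymptotic critical value of F̃ at the origin. -/
noncomputable section

/-- `t₀` is an asymptotic critical value of the meromorphic function `f/g` at
the origin of `ℂ²` if there is a sequence of points `z k ≠ 0` tending to `0`,
with `g (z k) ≠ 0`, such that `‖z k‖·‖∇(f/g)(z k)‖ → 0` and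
`f (z k) / g (z k) → t₀`. -/
def AsymptoticCriticalValue (f g : ℂ × ℂ → ℂ) (t₀ : ℂ) : Prop :=
  ∃ z : ℕ → ℂ × ℂ,
    Filter.Tendsto z Filter.atTop (nhds 0) ∧
    (∀ n, z n ≠ 0) ∧ (∀ n, g (z n) ≠ 0) ∧
    Filter.Tendsto (fun n => ‖z n‖ * ‖fderiv ℂ (fun w => f w / g w) (z n)‖)
      Filter.atTop (nhds 0) ∧
    Filter.Tendsto (fun n => f (z n) / g (z n)) Filter.atTop (nhds t₀)

open Filter Topology

/-- If two numerators agree on an open neighborhood of `0`, they give the same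
asymptotic critical values. -/
lemma acv_congr (V : Set (ℂ × ℂ)) (hV : IsOpen V) (h0V : (0 : ℂ × ℂ) ∈ V)
    (f₁ f₂ g : ℂ × ℂ → ℂ) (hff : ∀ z ∈ V, f₁ z = f₂ z) (t₀ : ℂ)
    (h : AsymptoticCriticalValue f₁ g t₀) : AsymptoticCriticalValue f₂ g t₀ := by
  obtain ⟨z, hz0, hne, hgz, hd, hF⟩ := h
  have memV : ∀ᶠ n in atTop, z n ∈ V := hz0.eventually_mem (hV.mem_nhds h0V)
  refine ⟨z, hz0, hne, hgz, ?_, ?_⟩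
  · refine hd.congr' ?_
    filter_upwards [memV] with n hn
    congr 2
    apply Filter.EventuallyEq.fderiv_eq
    filter_upwards [hV.mem_nhds hn] with w hw
    rw [hff w hw]
  · refine hF.congr' ?_
    filter_upwards [memV] with n hn
    rw [hff (z n) hn]

lemma acv_mul (U : Set (ℂ × ℂ)) (hU : IsOpen U) (h0U : (0 : ℂ × ℂ) ∈ U)
    (f g u : ℂ × ℂ → ℂ)
    (hf : AnalyticOnNhd ℂ f U) (hg : AnalyticOnNhd ℂ g U)
    (hu : AnalyticOnNhd ℂ u U) (hu0 : u 0 = 1) (t₀ : ℂ)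
    (h : AsymptoticCriticalValue f g t₀) :
    AsymptoticCriticalValue (fun z => u z * f z) g t₀ := by
  obtain ⟨z, hz0, hne, hgz, hd, hF⟩ := h
  have memU : ∀ᶠ n in atTop, z n ∈ U := hz0.eventually_mem (hU.mem_nhds h0U)
  have huc : Tendsto (fun n => u (z n)) atTop (𝓝 1) := by
    simpa [hu0, Function.comp_def] using ((hu 0 h0U).continuousAt.tendsto.comp hz0)
  refine ⟨z, hz0, hne, hgz, ?_, ?_⟩
  · -- derivative condition
    have hDu : ContinuousAt (fderiv ℂ u) 0 := (hu.fderiv 0 h0U).continuousAt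
    have h1 : Tendsto (fun n => ‖u (z n)‖ *
        (‖z n‖ * ‖fderiv ℂ (fun w => f w / g w) (z n)‖)) atTop (𝓝 (‖(1 : ℂ)‖ * 0)) :=
      huc.norm.mul hd
    have h2 : Tendsto (fun n => ‖f (z n) / g (z n)‖ * ‖z n‖ * ‖fderiv ℂ u (z n)‖)
        atTop (𝓝 (‖t₀‖ * ‖(0 : ℂ × ℂ)‖ * ‖fderiv ℂ u 0‖)) :=
      (hF.norm.mul hz0.norm).mul (hDu.tendsto.comp hz0).norm
    have hzero : (‖(1 : ℂ)‖ * 0 + ‖t₀‖ * ‖(0 : ℂ × ℂ)‖ * ‖fderiv ℂ u 0‖) = 0 := by simp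
    have hsum := hzero ▸ h1.add h2
    refine squeeze_zero' (Eventually.of_forall fun n => by positivity) ?_ hsum
    filter_upwards [memU] with n hnU
    have hfd : DifferentiableAt ℂ f (z n) := (hf _ hnU).differentiableAt
    have hgd : DifferentiableAt ℂ g (z n) := (hg _ hnU).differentiableAt
    have hud : DifferentiableAt ℂ u (z n) := (hu _ hnU).differentiableAt
    have hFd : DifferentiableAt ℂ (fun w => f w / g w) (z n) :=
      ((hf _ hnU).div (hg _ hnU) (hgz n)).differentiableAt
    have he : (fun w => u w * f w / g w) = fun w => u w * (f w / g w) := by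
      funext w; rw [mul_div_assoc]
    rw [he, fderiv_fun_mul hud hFd]
    have h3 := norm_add_le (u (z n) • fderiv ℂ (fun w => f w / g w) (z n))
      ((f (z n) / g (z n)) • fderiv ℂ u (z n))
    rw [norm_smul, norm_smul] at h3
    calc ‖z n‖ * ‖u (z n) • fderiv ℂ (fun w => f w / g w) (z n) +
          (f (z n) / g (z n)) • fderiv ℂ u (z n)‖
        ≤ ‖z n‖ * (‖u (z n)‖ * ‖fderiv ℂ (fun w => f w / g w) (z n)‖ +
            ‖f (z n) / g (z n)‖ * ‖fderiv ℂ u (z n)‖) :=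
          mul_le_mul_of_nonneg_left h3 (norm_nonneg _)
      _ = ‖u (z n)‖ * (‖z n‖ * ‖fderiv ℂ (fun w => f w / g w) (z n)‖) +
            ‖f (z n) / g (z n)‖ * ‖z n‖ * ‖fderiv ℂ u (z n)‖ := by ring
  · -- value condition
    have := huc.mul hF
    simpa [mul_div_assoc] using this

theorem stmt_8 (U : Set (ℂ × ℂ)) (hU : IsOpen U) (h0U : (0 : ℂ × ℂ) ∈ U)
    (f g u : ℂ × ℂ → ℂ)
    (hf : AnalyticOnNhd ℂ f U) (hg : AnalyticOnNhd ℂ g U)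
    (hu : AnalyticOnNhd ℂ u U) (hu0 : u 0 = 1) (t₀ : ℂ) :
    AsymptoticCriticalValue f g t₀ ↔
      AsymptoticCriticalValue (fun z => u z * f z) g t₀ := by
  constructor
  · exact acv_mul U hU h0U f g u hf hg hu hu0 t₀
  · intro h
    set V : Set (ℂ × ℂ) := U ∩ u ⁻¹' {0}ᶜ with hVdef
    have hV : IsOpen V := hu.continuousOn.isOpen_inter_preimage hU isOpen_compl_singleton
    have h0V : (0 : ℂ × ℂ) ∈ V := ⟨h0U, by simp [hu0]⟩
    have huf : AnalyticOnNhd ℂ (fun z => u z * f z) V :=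
      fun z hz => (hu z hz.1).mul (hf z hz.1)
    have hgV : AnalyticOnNhd ℂ g V := fun z hz => hg z hz.1
    have hv : AnalyticOnNhd ℂ (fun z => (u z)⁻¹) V :=
      fun z hz => (hu z hz.1).inv hz.2
    have hv0 : (u 0)⁻¹ = 1 := by rw [hu0, inv_one]
    have h2 := acv_mul V hV h0V (fun z => u z * f z) g (fun z => (u z)⁻¹)
      huf hgV hv hv0 t₀ h
    refine acv_congr V hV h0V _ f g ?_ t₀ h2
    intro w hw
    exact inv_mul_cancel_left₀ hw.2 (f w)
end
end
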